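/- Let ξ ∈ H with ξ ≠ 0 and a = Real.sqrt (1 + ‖ξ‖²). The bounded operator S on H defined by S x = x + ⟨x,ξ⟩·ξ is a positive invertible operator, and if H is infinite-dimensional then its spectrum is spectrum ℂ S = {a², 1} = {1 + ‖ξ‖², 1}. -/

import Mathlib

open scoped InnerProductSpace

set_option maxRecDepth 8000

private lemma keyUnit {H : Type*} [NormedAddCommGroup H] [InnerProductSpace ℂ H]
    [CompleteSpace H] (P : H →L[ℂ] H) (n μ : ℂ) (hP2 : P * P = n • P)
    (hμ : μ ≠ 0) (hμn : μ + n ≠ 0) :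
    IsUnit (μ • (1 : H →L[ℂ] H) + P) := by
  have h1 : (μ • (1 : H →L[ℂ] H) + P) * (μ⁻¹ • 1 - (μ⁻¹ * (μ + n)⁻¹) • P) = 1 := by
    simp only [mul_sub, add_mul, smul_mul_assoc, mul_smul_comm, one_mul, mul_one, hP2, smul_smul]
    match_scalars <;> (field_simp; try ring)
  have h2 : (μ⁻¹ • 1 - (μ⁻¹ * (μ + n)⁻¹) • P) * (μ • (1 : H →L[ℂ] H) + P) = 1 := by
    simp only [mul_add, sub_mul, smul_mul_assoc, mul_smul_comm, one_mul, mul_one, hP2, smul_smul]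
    match_scalars <;> (field_simp; try ring)
  exact ⟨⟨_, _, h1, h2⟩, rfl⟩

set_option maxHeartbeats 1000000 in
/-- For `ξ ≠ 0` in a complex Hilbert space `H` and `a = √(1 + ‖ξ‖²)`, the bounded operator
`S x = x + ⟨x,ξ⟩·ξ` (inner product linear in the first slot, i.e. `⟪ξ,x⟫_ℂ` in Mathlib's
convention) is a positive invertible operator, and if `H` is infinite dimensional then
`spectrum ℂ S = {a², 1} = {1 + ‖ξ‖², 1}`. -/
theorem stmt1 {H : Type*} [NormedAddCommGroup H] [InnerProductSpace ℂ H] [CompleteSpace H]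
    (ξ : H) (hξ : ξ ≠ 0) (a : ℝ) (ha : a = Real.sqrt (1 + ‖ξ‖ ^ 2))
    (S : H →L[ℂ] H) (hS : ∀ x : H, S x = x + ⟪ξ, x⟫_ℂ • ξ) :
    S.IsPositive ∧ IsUnit S ∧
      (¬ FiniteDimensional ℂ H →
        spectrum ℂ S = {((a : ℂ) ^ 2), 1} ∧
          spectrum ℂ S = {((1 + ‖ξ‖ ^ 2 : ℝ) : ℂ), 1}) := by
  have hn0 : (0:ℝ) ≤ 1 + ‖ξ‖ ^ 2 := by positivity
  have ha2 : ((a : ℂ)) ^ 2 = ((1 + ‖ξ‖ ^ 2 : ℝ) : ℂ) := by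
    rw [ha]
    norm_cast
    exact Real.sq_sqrt hn0
  have hxx : ⟪ξ, ξ⟫_ℂ = ((‖ξ‖ ^ 2 : ℝ) : ℂ) := by
    rw [inner_self_eq_norm_sq_to_K]; norm_cast
  have hP2 : ((innerSL ℂ ξ).smulRight ξ) * ((innerSL ℂ ξ).smulRight ξ)
      = ((‖ξ‖ ^ 2 : ℝ) : ℂ) • ((innerSL ℂ ξ).smulRight ξ) := by
    refine ContinuousLinearMap.ext fun x => ?_
    simp only [ContinuousLinearMap.mul_apply, ContinuousLinearMap.smul_apply,
      ContinuousLinearMap.smulRight_apply, innerSL_apply_apply, inner_smul_right, hxx, smul_smul]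
    ring_nf
  have hSP : S = (1:ℂ) • 1 + (innerSL ℂ ξ).smulRight ξ := by
    ext x
    simp [hS]
  have hnn : ∀ μ : ℂ, μ ≠ 0 → μ + ((‖ξ‖ ^ 2 : ℝ) : ℂ) ≠ 0 →
      IsUnit (μ • (1 : H →L[ℂ] H) + (innerSL ℂ ξ).smulRight ξ) :=
    fun μ h1 h2 => keyUnit _ _ _ hP2 h1 h2
  have hne1 : (1:ℂ) + ((‖ξ‖ ^ 2 : ℝ) : ℂ) ≠ 0 := by
    intro h
    rw [show (1:ℂ) = ((1:ℝ):ℂ) by norm_num, ← Complex.ofReal_add] at h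
    have h' : (1 + ‖ξ‖ ^ 2 : ℝ) = 0 := by exact_mod_cast h
    nlinarith [sq_nonneg ‖ξ‖]
  refine ⟨?_, ?_, ?_⟩
  · constructor
    · intro x y
      simp [hS, inner_add_left, inner_add_right, inner_smul_left, inner_smul_right]
      try ring
    · intro x
      rw [ContinuousLinearMap.reApplyInnerSelf_apply, hS, inner_add_left, inner_smul_left,
        RCLike.conj_mul, map_add, ← RCLike.ofReal_pow, RCLike.ofReal_re]
      exact add_nonneg inner_self_nonneg (sq_nonneg _)
  · rw [hSP]
    exact hnn 1 one_ne_zero hne1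
  · intro hinf
    have hspec : spectrum ℂ S = {((1 + ‖ξ‖ ^ 2 : ℝ) : ℂ), 1} := by
      ext μ
      simp only [Set.mem_insert_iff, Set.mem_singleton_iff, spectrum.mem_iff]
      constructor
      · intro hnu
        by_contra hcon
        push_neg at hcon
        obtain ⟨h1, h2⟩ := hcon
        apply hnu
        have he : algebraMap ℂ (H →L[ℂ] H) μ - S
            = -((1 - μ) • 1 + (innerSL ℂ ξ).smulRight ξ) := by
          rw [hSP, Algebra.algebraMap_eq_smul_one]
          module
        rw [he]
        refine (hnn (1 - μ) (sub_ne_zero.mpr (Ne.symm h2)) ?_).neg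
        intro h
        apply h1
        push_cast at h ⊢
        linear_combination -h
      · rintro (rfl | rfl)
        · intro hu
          have hker : (algebraMap ℂ (H →L[ℂ] H) ((1 + ‖ξ‖ ^ 2 : ℝ) : ℂ) - S) ξ = 0 := by
            rw [ContinuousLinearMap.sub_apply, Algebra.algebraMap_eq_smul_one,
              ContinuousLinearMap.smul_apply, ContinuousLinearMap.one_apply, hS, hxx]
            push_cast
            module
          obtain ⟨u, hu⟩ := hu
          have h0 : ((↑u⁻¹ * ↑u : H →L[ℂ] H)) ξ = ξ := by rw [u.inv_mul]; rfl
          rw [ContinuousLinearMap.mul_apply, hu, hker, map_zero] at h0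
          exact absurd h0.symm hξ
        · intro hu
          apply hinf
          have he : algebraMap ℂ (H →L[ℂ] H) 1 - S = -((innerSL ℂ ξ).smulRight ξ) := by
            rw [hSP, Algebra.algebraMap_eq_smul_one]
            module
          rw [he] at hu
          have hPu : IsUnit ((innerSL ℂ ξ).smulRight ξ) := (IsUnit.neg_iff _).mp hu
          obtain ⟨u, hu⟩ := hPu
          have hspan : (⊤ : Submodule ℂ H) ≤ Submodule.span ℂ {ξ} := by
            intro y _
            have h0 : ((↑u * ↑u⁻¹ : H →L[ℂ] H)) y = y := by rw [u.mul_inv]; rfl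
            rw [ContinuousLinearMap.mul_apply, hu] at h0
            exact Submodule.mem_span_singleton.mpr ⟨_, h0⟩
          exact Module.finite_def.mpr ⟨{ξ}, by
            rw [Finset.coe_singleton]
            exact eq_top_iff.mpr hspan⟩
    refine ⟨?_, hspec⟩
    rw [hspec, ha2]
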